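/- arXiv:2011.07587 — 8 statements merged into one kernel-verified Lean document; each statement's English description precedes it below -/
import Mathlib

section
/- For any constant K > 0, the function v*(r) = sqrt(1 - K^2(1 - 2M/r)) is a stationary solution of the relativistic Burgers–Schwarzschild equation, i.e. it satisfies d/dr[(1 - 2M/r)(v*(r)^2 - 1)/2] = (2M/r^2)(v*(r)^2 - 1) for all r > 2M in its domain of definition. -/
/-- For any constant `K > 0`, the function `v*(r) = √(1 - K²(1 - 2M/r))` is a stationary
solution of the relativistic Burgers–Schwarzschild equation: it satisfies
`d/dr [(1 - 2M/r)(v*(r)² - 1)/2] = (2M/r²)(v*(r)² - 1)` on its domain of definition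
`{r | 2M < r ∧ 0 ≤ 1 - K²(1 - 2M/r)}`. -/
theorem stmt0 (M K : ℝ) (hM : 0 < M) (hK : 0 < K)
    (vstar : ℝ → ℝ)
    (hv : ∀ r, vstar r = Real.sqrt (1 - K^2 * (1 - 2*M/r)))
    (D : Set ℝ)
    (hD : D = {r : ℝ | 2*M < r ∧ 0 ≤ 1 - K^2 * (1 - 2*M/r)}) :
    ∀ r ∈ D, HasDerivWithinAt
      (fun s => (1 - 2*M/s) * ((vstar s)^2 - 1) / 2)
      (2*M/r^2 * ((vstar r)^2 - 1)) D r := by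
  intro r hr
  rw [hD] at hr
  obtain ⟨hr1, hr2⟩ := hr
  have hr0 : r ≠ 0 := ne_of_gt (by linarith)
  have h1 : HasDerivAt (fun s : ℝ => 1 - 2*M/s) (2*M/r^2) r := by
    have := ((hasDerivAt_inv hr0).const_mul (2*M)).const_sub 1
    refine this.congr_deriv ?_ |>.congr_of_eventuallyEq (Filter.Eventually.of_forall fun s => by simp [div_eq_mul_inv])
    field_simp
  have hg : HasDerivAt (fun s : ℝ => -(K^2)/2 * (1 - 2*M/s)^2)
      (-(K^2)/2 * (2 * (1 - 2*M/r) * (2*M/r^2))) r := by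
    simpa [mul_comm, pow_one] using (h1.pow 2).const_mul (-(K^2)/2)
  have heq : ∀ s ∈ D, (1 - 2*M/s) * ((vstar s)^2 - 1) / 2
      = -(K^2)/2 * (1 - 2*M/s)^2 := by
    intro s hs
    rw [hD] at hs
    rw [hv s, Real.sq_sqrt hs.2]
    ring
  have hval : 2*M/r^2 * ((vstar r)^2 - 1)
      = -(K^2)/2 * (2 * (1 - 2*M/r) * (2*M/r^2)) := by
    rw [hv r, Real.sq_sqrt hr2]; ring
  rw [hval]
  exact (hg.hasDerivWithinAt).congr heq (heq r (by rw [hD]; exact ⟨hr1, hr2⟩))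
end

section
/- For k ∈ (0,1) and any real K_a with |K_a| < (1-k^2)k^{2k^2/(1-k^2)} and K_a ≠ 0, the equation sign(v)(1 - v^2)|v|^{2k^2/(1-k^2)} = K_a has exactly two solutions v in (-1,1)\{0}, one with |v| < k (subsonic) and one with |v| > k (supersonic). -/
noncomputable def gfun (k v : ℝ) : ℝ :=
  Real.sign v * (1 - v^2) * |v| ^ (2*k^2/(1-k^2))

lemma gfun_neg (k v : ℝ) : gfun k (-v) = - gfun k v := by
  unfold gfun
  rw [Real.sign_neg, abs_neg, neg_sq]
  ring

lemma gfun_pos_eq (k v : ℝ) (hv : 0 < v) :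
    gfun k v = (1 - v^2) * v ^ (2*k^2/(1-k^2)) := by
  unfold gfun
  rw [Real.sign_of_pos hv, abs_of_pos hv, one_mul]

lemma stmt8_pos (k Ka : ℝ) (hk : k ∈ Set.Ioo (0:ℝ) 1)
    (hKaM : Ka < (1 - k^2) * k ^ (2*k^2/(1-k^2))) (hKa0 : 0 < Ka) :
    ∃ v₁ v₂ : ℝ,
      v₁ ∈ Set.Ioo (-1 : ℝ) 1 ∧ v₁ ≠ 0 ∧ gfun k v₁ = Ka ∧ |v₁| < k ∧
      v₂ ∈ Set.Ioo (-1 : ℝ) 1 ∧ v₂ ≠ 0 ∧ gfun k v₂ = Ka ∧ k < |v₂| ∧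
      ∀ v ∈ Set.Ioo (-1 : ℝ) 1, v ≠ 0 → gfun k v = Ka → v = v₁ ∨ v = v₂ := by
  obtain ⟨hk0, hk1⟩ := hk
  set α : ℝ := 2*k^2/(1-k^2) with hα_def
  have hk2 : (0:ℝ) < 1 - k^2 := by nlinarith
  have hα : 0 < α := by positivity
  set h : ℝ → ℝ := fun v => (1 - v^2) * v ^ α with hh
  have hcont : Continuous h := by
    apply Continuous.mul (by continuity)
    rw [continuous_iff_continuousAt]
    intro x
    exact Real.continuousAt_rpow_const x α (Or.inr hα.le)
  -- derivative
  have hderiv : ∀ x : ℝ, 0 < x →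
      HasDerivAt h (x ^ (α-1) * ((1-x^2)*α - 2*x^2)) x := by
    intro x hx
    have h1 : HasDerivAt (fun v : ℝ => 1 - v^2) (-(2*x)) x := by
      simpa using ((hasDerivAt_pow 2 x).const_sub 1)
    have h2 : HasDerivAt (fun v : ℝ => v ^ α) (α * x ^ (α-1)) x :=
      Real.hasDerivAt_rpow_const (Or.inl hx.ne')
    have := h1.mul h2
    convert this using 1
    case e'_4 => rfl
    case e'_5 => rfl
    case e'_8 => rfl
    have hxα : x ^ α = x ^ (α-1) * x := by
      rw [← Real.rpow_add_one hx.ne']; ring_nf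
    rw [hxα]; ring
  have hkey : ∀ x : ℝ, (1-x^2)*α - 2*x^2 = 2*(k^2-x^2)/(1-k^2) := by
    intro x
    rw [hα_def]; field_simp; ring
  have hmono : StrictMonoOn h (Set.Icc 0 k) := by
    apply strictMonoOn_of_deriv_pos (convex_Icc 0 k) hcont.continuousOn
    intro x hx
    rw [interior_Icc] at hx
    rw [(hderiv x hx.1).deriv, hkey]
    have hp : 0 < x ^ (α-1) := Real.rpow_pos_of_pos hx.1 _
    have h2 : x^2 < k^2 := by nlinarith [hx.1, hx.2]
    have h3 : 0 < 2*(k^2-x^2)/(1-k^2) := div_pos (by nlinarith) hk2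
    exact mul_pos hp h3
  have hanti : StrictAntiOn h (Set.Icc k 1) := by
    apply strictAntiOn_of_deriv_neg (convex_Icc k 1) hcont.continuousOn
    intro x hx
    rw [interior_Icc] at hx
    rw [(hderiv x (hk0.trans hx.1)).deriv, hkey]
    have hxp : 0 < x ^ (α-1) := Real.rpow_pos_of_pos (hk0.trans hx.1) _
    have h2 : k^2 < x^2 := by nlinarith [hx.1, hk0]
    have : 2*(k^2-x^2)/(1-k^2) < 0 := by
      apply div_neg_of_neg_of_pos (by nlinarith) hk2
    nlinarith
  have h0 : h 0 = 0 := by simp [hh, Real.zero_rpow hα.ne']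
  have h1v : h 1 = 0 := by simp [hh]
  have hKa_mem : Ka ∈ Set.Ioo (h 0) (h k) := by
    constructor
    · rw [h0]; exact hKa0
    · exact hKaM
  obtain ⟨v₁, hv₁mem, hv₁⟩ := intermediate_value_Ioo hk0.le hcont.continuousOn hKa_mem
  have hKa_mem' : Ka ∈ Set.Ioo (h 1) (h k) := by
    constructor
    · rw [h1v]; exact hKa0
    · exact hKaM
  obtain ⟨v₂, hv₂mem, hv₂⟩ := intermediate_value_Ioo' hk1.le hcont.continuousOn hKa_mem'
  have hv₁0 : 0 < v₁ := hv₁mem.1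
  have hv₂0 : 0 < v₂ := hk0.trans hv₂mem.1
  refine ⟨v₁, v₂, ⟨by linarith [hv₁mem.1, hv₁mem.2], by linarith [hv₁mem.2]⟩, hv₁0.ne',
    by rw [gfun_pos_eq k v₁ hv₁0]; exact hv₁,
    by rw [abs_of_pos hv₁0]; exact hv₁mem.2,
    ⟨by linarith [hv₂mem.1], hv₂mem.2⟩, hv₂0.ne',
    by rw [gfun_pos_eq k v₂ hv₂0]; exact hv₂,
    by rw [abs_of_pos hv₂0]; exact hv₂mem.1, ?_⟩
  intro v hv hv0 hgv
  have hvpos : 0 < v := by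
    by_contra hle
    push_neg at hle
    have hvneg : v < 0 := lt_of_le_of_ne hle hv0
    have : gfun k v < 0 := by
      unfold gfun
      rw [Real.sign_of_neg hvneg]
      have h1 : (0:ℝ) < 1 - v^2 := by nlinarith [hv.1, hv.2]
      have h2 : (0:ℝ) < |v| ^ α := Real.rpow_pos_of_pos (abs_pos.mpr hv0) _
      nlinarith
    linarith [hgv ▸ this]
  have hhv : h v = Ka := by
    show (1 - v^2) * v ^ α = Ka
    rw [hα_def, ← gfun_pos_eq k v hvpos]; exact hgv
  have hvk : v ≠ k := by
    intro heq
    have hk_eq : h k = (1-k^2) * k ^ α := rfl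
    rw [heq, hk_eq] at hhv
    linarith
  rcases lt_or_gt_of_ne hvk with hlt | hgt
  · left
    exact hmono.injOn ⟨hvpos.le, hlt.le⟩ ⟨hv₁0.le, hv₁mem.2.le⟩ (by rw [hhv, hv₁])
  · right
    exact hanti.injOn ⟨hgt.le, hv.2.le⟩ ⟨hv₂mem.1.le, hv₂mem.2.le⟩ (by rw [hhv, hv₂])

/-- For `k ∈ (0,1)` and `Kₐ` with `0 < |Kₐ| < (1-k²)k^{2k²/(1-k²)}`, the equation
`g(v) = Kₐ` has exactly two solutions `v ∈ (-1,1) \ {0}`, one subsonic (`|v| < k`)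
and one supersonic (`|v| > k`). -/
theorem stmt8 (k Ka : ℝ) (hk : k ∈ Set.Ioo (0:ℝ) 1)
    (hKa : |Ka| < (1 - k^2) * k ^ (2*k^2/(1-k^2))) (hKa0 : Ka ≠ 0) :
    ∃ v₁ v₂ : ℝ,
      v₁ ∈ Set.Ioo (-1 : ℝ) 1 ∧ v₁ ≠ 0 ∧ gfun k v₁ = Ka ∧ |v₁| < k ∧
      v₂ ∈ Set.Ioo (-1 : ℝ) 1 ∧ v₂ ≠ 0 ∧ gfun k v₂ = Ka ∧ k < |v₂| ∧
      ∀ v ∈ Set.Ioo (-1 : ℝ) 1, v ≠ 0 → gfun k v = Ka → v = v₁ ∨ v = v₂ := by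
  rcases hKa0.lt_or_gt with hneg | hpos
  · have hM : -Ka < (1 - k^2) * k ^ (2*k^2/(1-k^2)) := by
      rw [abs_of_neg hneg] at hKa; exact hKa
    obtain ⟨v₁, v₂, hm₁, hn₁, hg₁, hs₁, hm₂, hn₂, hg₂, hs₂, huniq⟩ :=
      stmt8_pos k (-Ka) hk hM (by linarith)
    refine ⟨-v₁, -v₂, ⟨by linarith [hm₁.2], by linarith [hm₁.1]⟩, neg_ne_zero.mpr hn₁,
      by rw [gfun_neg, hg₁]; ring, by rwa [abs_neg],
      ⟨by linarith [hm₂.2], by linarith [hm₂.1]⟩, neg_ne_zero.mpr hn₂,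
      by rw [gfun_neg, hg₂]; ring, by rwa [abs_neg], ?_⟩
    intro v hv hv0 hgv
    have : -v = v₁ ∨ -v = v₂ := by
      apply huniq (-v) ⟨by linarith [hv.2], by linarith [hv.1]⟩ (neg_ne_zero.mpr hv0)
      rw [gfun_neg, hgv]
    rcases this with h | h
    · left; linarith [h]
    · right; linarith [h]
  · have hM : Ka < (1 - k^2) * k ^ (2*k^2/(1-k^2)) := by
      rw [abs_of_pos hpos] at hKa; exact hKa
    exact stmt8_pos k Ka hk hM hpos
end

section
/- A smooth pair (ρ(r), v(r)) with ρ > 0 and 0 < |v| < 1, v ≠ ±k, satisfying the ODE system dv/dr = v(1-v^2)(1-k^2)/(r(r-2M)) · ((2k^2/(1-k^2))(r-2M) - M)/(v^2 - k^2) and dρ/dr = -2(r-M)ρ/(r(r-2M)) - ρ(1+v^2)(1-k^2)/(r(r-2M)) · ((2k^2/(1-k^2))(r-2M) - M)/(v^2 - k^2), keeps the quantities C_1(r) = sign(v)(1-v^2)|v|^{2k^2/(1-k^2)} r^{4k^2/(1-k^2)}/(1 - 2M/r) and C_2(r) = r(r-2M)ρ v/(1-v^2) constant in r on any interval contained in (2M,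 ∞). -/
private theorem myconst {s : Set ℝ} (hconv : Convex ℝ s) {f : ℝ → ℝ}
    (hf : ∀ x ∈ s, HasDerivWithinAt f 0 s x) {x y : ℝ} (hx : x ∈ s) (hy : y ∈ s) :
    f x = f y := by
  have h := Convex.norm_image_sub_le_of_norm_hasFDerivWithin_le
    (f' := fun _ => (0 : ℝ →L[ℝ] ℝ)) (C := 0)
    (fun z hz => by
      have h' := hf z hz
      rw [hasDerivWithinAt_iff_hasFDerivWithinAt] at h'
      have he : (ContinuousLinearMap.toSpanSingleton ℝ (0:ℝ)) = 0 := by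
        ext; simp
      rwa [he] at h')
    (fun z _ => by simp) hconv hx hy
  have h0 : ‖f y - f x‖ ≤ 0 := by simpa using h
  have h1 : f y - f x = 0 := norm_eq_zero.mp (le_antisymm h0 (norm_nonneg _))
  linarith

set_option maxHeartbeats 2000000 in
private theorem aux1 (M k ε : ℝ) (hM : 0 < M) (hk0 : 0 < k) (hk1 : k < 1)
    (hε : ε = 1 ∨ ε = -1)
    (s : Set ℝ) (hs : s ⊆ Set.Ioi (2*M)) (hconv : Convex ℝ s)
    (v : ℝ → ℝ)
    (hvpos : ∀ r ∈ s, 0 < ε * v r)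
    (hvlt : ∀ r ∈ s, |v r| < 1)
    (hvk : ∀ r ∈ s, |v r| ≠ k)
    (hv' : ∀ r ∈ s, HasDerivAt v
      (v r * ((1 - (v r)^2) * (1 - k^2)) / (r * (r - 2*M))
        * ((2*k^2/(1-k^2)) * (r - 2*M) - M) / ((v r)^2 - k^2)) r)
    {x y : ℝ} (hx : x ∈ s) (hy : y ∈ s) :
    (1 - (v x)^2) * (ε * v x) ^ (2*k^2/(1-k^2)) * x ^ (4*k^2/(1-k^2)) / (1 - 2*M/x)
    = (1 - (v y)^2) * (ε * v y) ^ (2*k^2/(1-k^2)) * y ^ (4*k^2/(1-k^2)) / (1 - 2*M/y) := by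
  apply myconst hconv (f := fun t =>
    (1 - (v t)^2) * (ε * v t) ^ (2*k^2/(1-k^2)) * t ^ (4*k^2/(1-k^2)) / (1 - 2*M/t))
    (hx := hx) (hy := hy)
  intro r hr
  have hr2M : 2*M < r := hs hr
  have hrpos : 0 < r := by linarith
  have hr0 : r ≠ 0 := ne_of_gt hrpos
  have hrm : r - 2*M ≠ 0 := by intro h; nlinarith
  have hεv : 0 < ε * v r := hvpos r hr
  have hv0 : v r ≠ 0 := by intro h; rw [h] at hεv; simp at hεv
  have hk2 : 1 - k^2 ≠ 0 := by nlinarith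
  have hvk2 : (v r)^2 - k^2 ≠ 0 := by
    intro h
    apply hvk r hr
    rw [← Real.sqrt_sq_eq_abs, show (v r)^2 = k^2 by linarith, Real.sqrt_sq hk0.le]
  have h1v2 : (0:ℝ) < 1 - (v r)^2 := by
    have := hvlt r hr
    nlinarith [sq_abs (v r), abs_nonneg (v r)]
  have hdeq : 1 - 2*M/r = (r - 2*M)/r := by field_simp
  have hdenpos : 0 < 1 - 2*M/r := by rw [hdeq]; exact div_pos (by linarith) hrpos
  have hden : 1 - 2*M/r ≠ 0 := ne_of_gt hdenpos
  have hv := hv' r hr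
  set V := v r * ((1 - (v r)^2) * (1 - k^2)) / (r * (r - 2*M))
        * ((2*k^2/(1-k^2)) * (r - 2*M) - M) / ((v r)^2 - k^2) with hV
  have hA : HasDerivAt (fun t => 1 - (v t)^2) (-(2 * v r * V)) r := by
    have := (hv.fun_pow 2).const_sub 1
    refine this.congr_deriv ?_
    push_cast
    ring
  have hεvd : HasDerivAt (fun t => ε * v t) (ε * V) r := hv.const_mul ε
  have hB : HasDerivAt (fun t => (ε * v t) ^ (2*k^2/(1-k^2)))
      ((2*k^2/(1-k^2)) * (ε * v r) ^ (2*k^2/(1-k^2) - 1) * (ε * V)) r := by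
    have h2 := Real.hasDerivAt_rpow_const (x := ε * v r) (p := 2*k^2/(1-k^2))
      (Or.inl (ne_of_gt hεv))
    exact h2.comp r hεvd
  have hC : HasDerivAt (fun t : ℝ => t ^ (4*k^2/(1-k^2)))
      ((4*k^2/(1-k^2)) * r ^ (4*k^2/(1-k^2) - 1)) r :=
    Real.hasDerivAt_rpow_const (Or.inl hr0)
  have hDen : HasDerivAt (fun t : ℝ => 1 - 2*M/t) (-((0 * r - 2*M*1)/r^2)) r :=
    ((hasDerivAt_const r (2*M)).div (hasDerivAt_id r) hr0).const_sub 1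
  have hF := ((hA.fun_mul hB).fun_mul hC).fun_div hDen hden
  refine hF.hasDerivWithinAt.congr_deriv ?_
  rw [Real.rpow_sub hεv, Real.rpow_one, Real.rpow_sub hrpos, Real.rpow_one, hV]
  rcases hε with rfl | rfl
  · generalize ((1:ℝ) * v r) ^ (2*k^2/(1-k^2)) = P
    generalize r ^ (4*k^2/(1-k^2)) = Q
    field_simp
    ring
  · generalize ((-1:ℝ) * v r) ^ (2*k^2/(1-k^2)) = P
    generalize r ^ (4*k^2/(1-k^2)) = Q
    field_simp
    ring

private theorem aux2 (M k : ℝ) (hM : 0 < M) (hk0 : 0 < k) (hk1 : k < 1)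
    (s : Set ℝ) (hs : s ⊆ Set.Ioi (2*M)) (hconv : Convex ℝ s)
    (ρ v : ℝ → ℝ)
    (hvlt : ∀ r ∈ s, 0 < |v r| ∧ |v r| < 1)
    (hvk : ∀ r ∈ s, |v r| ≠ k)
    (hv' : ∀ r ∈ s, HasDerivAt v
      (v r * ((1 - (v r)^2) * (1 - k^2)) / (r * (r - 2*M))
        * ((2*k^2/(1-k^2)) * (r - 2*M) - M) / ((v r)^2 - k^2)) r)
    (hρ' : ∀ r ∈ s, HasDerivAt ρ
      (-(2*(r - M)) / (r * (r - 2*M)) * ρ r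
        - ρ r * ((1 + (v r)^2) * (1 - k^2)) / (r * (r - 2*M))
          * ((2*k^2/(1-k^2)) * (r - 2*M) - M) / ((v r)^2 - k^2)) r)
    {x y : ℝ} (hx : x ∈ s) (hy : y ∈ s) :
    x * (x - 2*M) * ρ x * v x / (1 - (v x)^2)
    = y * (y - 2*M) * ρ y * v y / (1 - (v y)^2) := by
  apply myconst hconv (f := fun t => t * (t - 2*M) * ρ t * v t / (1 - (v t)^2))
    (hx := hx) (hy := hy)
  intro r hr
  have hr2M : 2*M < r := hs hr
  have hrpos : 0 < r := by linarith
  have hr0 : r ≠ 0 := ne_of_gt hrpos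
  have hrm : r - 2*M ≠ 0 := by intro h; nlinarith
  have hv0 : v r ≠ 0 := by
    have := (hvlt r hr).1
    exact fun h => by simp [h] at this
  have hk2 : 1 - k^2 ≠ 0 := by nlinarith
  have hvk2 : (v r)^2 - k^2 ≠ 0 := by
    intro h
    apply hvk r hr
    rw [← Real.sqrt_sq_eq_abs, show (v r)^2 = k^2 by linarith, Real.sqrt_sq hk0.le]
  have h1v2 : (0:ℝ) < 1 - (v r)^2 := by
    have := (hvlt r hr).2
    nlinarith [sq_abs (v r), abs_nonneg (v r)]
  have hv := hv' r hr
  have hρ := hρ' r hr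
  set V := v r * ((1 - (v r)^2) * (1 - k^2)) / (r * (r - 2*M))
        * ((2*k^2/(1-k^2)) * (r - 2*M) - M) / ((v r)^2 - k^2) with hV
  set P := -(2*(r - M)) / (r * (r - 2*M)) * ρ r
        - ρ r * ((1 + (v r)^2) * (1 - k^2)) / (r * (r - 2*M))
          * ((2*k^2/(1-k^2)) * (r - 2*M) - M) / ((v r)^2 - k^2) with hP
  have hA : HasDerivAt (fun t => 1 - (v t)^2) (-(2 * v r * V)) r := by
    have := (hv.fun_pow 2).const_sub 1
    refine this.congr_deriv ?_
    push_cast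
    ring
  have h12 : HasDerivAt (fun t : ℝ => t * (t - 2*M)) (1 * (r - 2*M) + r * 1) r :=
    (hasDerivAt_id r).mul ((hasDerivAt_id r).sub_const (2*M))
  have hF := (((h12.fun_mul hρ).fun_mul hv).fun_div hA (ne_of_gt h1v2))
  refine hF.hasDerivWithinAt.congr_deriv ?_
  rw [hV, hP]
  field_simp
  ring

/-- The quantities `C₁(r) = sign(v)(1-v²)|v|^{2k²/(1-k²)} r^{4k²/(1-k²)}/(1 - 2M/r)` and
`C₂(r) = r(r-2M)ρv/(1-v²)` are first integrals of the ODE system satisfied by smooth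
stationary solutions `(ρ, v)` of the relativistic Euler–Schwarzschild model: they are
constant on any interval contained in `(2M, ∞)`. -/
theorem stmt10 (M k : ℝ) (hM : 0 < M) (hk : k ∈ Set.Ioo (0:ℝ) 1)
    (s : Set ℝ) (hs : s ⊆ Set.Ioi (2*M)) (hconv : Convex ℝ s)
    (ρ v : ℝ → ℝ)
    (hρpos : ∀ r ∈ s, 0 < ρ r)
    (hvlt : ∀ r ∈ s, 0 < |v r| ∧ |v r| < 1)
    (hvk : ∀ r ∈ s, |v r| ≠ k)
    (hv' : ∀ r ∈ s, HasDerivAt v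
      (v r * ((1 - (v r)^2) * (1 - k^2)) / (r * (r - 2*M))
        * ((2*k^2/(1-k^2)) * (r - 2*M) - M) / ((v r)^2 - k^2)) r)
    (hρ' : ∀ r ∈ s, HasDerivAt ρ
      (-(2*(r - M)) / (r * (r - 2*M)) * ρ r
        - ρ r * ((1 + (v r)^2) * (1 - k^2)) / (r * (r - 2*M))
          * ((2*k^2/(1-k^2)) * (r - 2*M) - M) / ((v r)^2 - k^2)) r)
    (C₁ C₂ : ℝ → ℝ)
    (hC₁ : ∀ r, C₁ r = Real.sign (v r) * (1 - (v r)^2) * |v r| ^ (2*k^2/(1-k^2))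
      * r ^ (4*k^2/(1-k^2)) / (1 - 2*M/r))
    (hC₂ : ∀ r, C₂ r = r * (r - 2*M) * ρ r * v r / (1 - (v r)^2)) :
    ∀ r₁ ∈ s, ∀ r₂ ∈ s, C₁ r₁ = C₁ r₂ ∧ C₂ r₁ = C₂ r₂ := by
  obtain ⟨hk0, hk1⟩ := hk
  intro r₁ h₁ r₂ h₂
  have hvne : ∀ r ∈ s, v r ≠ 0 := fun r hr => abs_pos.mp (hvlt r hr).1
  have hprop : ∀ x ∈ s, ∀ y ∈ s, 0 < v x → 0 < v y := by
    intro x hx y hy hvx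
    by_contra h
    push_neg at h
    have hsub : Set.uIcc x y ⊆ s := hconv.ordConnected.uIcc_subset hx hy
    have hcont : ContinuousOn v (Set.uIcc x y) := fun t ht =>
      ((hv' t (hsub ht)).continuousAt).continuousWithinAt
    have h0 : (0:ℝ) ∈ Set.uIcc (v x) (v y) := by
      rw [Set.mem_uIcc]
      right
      exact ⟨h, hvx.le⟩
    obtain ⟨t, ht, hvt⟩ := intermediate_value_uIcc hcont h0
    exact hvne t (hsub ht) hvt
  obtain ⟨ε, hε, hvpos⟩ : ∃ ε : ℝ, (ε = 1 ∨ ε = -1) ∧ ∀ r ∈ s, 0 < ε * v r := by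
    by_cases hc : 0 < v r₁
    · exact ⟨1, Or.inl rfl, fun r hr => by simpa using hprop r₁ h₁ r hr hc⟩
    · refine ⟨-1, Or.inr rfl, fun r hr => ?_⟩
      have h1 : ¬ 0 < v r := fun h => hc (hprop r hr r₁ h₁ h)
      have h2 : v r < 0 := lt_of_le_of_ne (not_lt.mp h1) (hvne r hr)
      linarith
  have habs : ∀ r ∈ s, |v r| = ε * v r := by
    intro r hr
    rcases hε with rfl | rfl
    · rw [abs_of_pos (by simpa using hvpos r hr)]
      ring
    · have h2 : v r < 0 := by have := hvpos r hr; linarith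
      rw [abs_of_neg h2]
      ring
  have hsign : ∀ r ∈ s, Real.sign (v r) = ε := by
    intro r hr
    rcases hε with rfl | rfl
    · exact Real.sign_of_pos (by simpa using hvpos r hr)
    · exact Real.sign_of_neg (by have := hvpos r hr; linarith)
  constructor
  · have haux := aux1 M k ε hM hk0 hk1 hε s hs hconv v hvpos
      (fun r hr => (hvlt r hr).2) hvk hv' h₁ h₂
    rw [hC₁ r₁, hC₁ r₂, hsign r₁ h₁, hsign r₂ h₂, habs r₁ h₁, habs r₂ h₂]
    linear_combination ε * haux
  · rw [hC₂ r₁, hC₂ r₂]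
    exact aux2 M k hM hk0 hk1 s hs hconv ρ v hvlt hvk hv' hρ' h₁ h₂
end

section
/- Given states (ρ_L, v_L), (ρ_R, v_R) with ρ_L, ρ_R > 0 and v_L, v_R ∈ (-1,1), v_L ≠ v_R, the quadratic equation α v^2 + β v + γ = 0 with α = ρ_R(1-v_L^2) - ρ_L(1-v_R^2), β = -2(ρ_R v_R(1-v_L^2) - ρ_L v_L(1-v_R^2)), γ = ρ_R v_R^2(1-v_L^2) - ρ_L v_L^2(1-v_R^2) has discriminant D = 4 ρ_L ρ_R (1-v_L^2)(1-v_R^2)(v_R - v_L)^2 > 0. -/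
/-- The quadratic `αv² + βv + γ = 0` arising from the Roe-type property for the
Euler–Schwarzschild model has discriminant
`D = 4ρ_Lρ_R(1-v_L²)(1-v_R²)(v_R - v_L)² > 0` whenever `ρ_L, ρ_R > 0`,
`v_L, v_R ∈ (-1,1)` and `v_L ≠ v_R`. -/
theorem stmt12 (ρL ρR vL vR : ℝ) (hρL : 0 < ρL) (hρR : 0 < ρR)
    (hvL : vL ∈ Set.Ioo (-1 : ℝ) 1) (hvR : vR ∈ Set.Ioo (-1 : ℝ) 1)
    (hne : vL ≠ vR)
    (α β γ : ℝ)
    (hα : α = ρR * (1 - vL^2) - ρL * (1 - vR^2))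
    (hβ : β = -(2 * (ρR * vR * (1 - vL^2) - ρL * vL * (1 - vR^2))))
    (hγ : γ = ρR * vR^2 * (1 - vL^2) - ρL * vL^2 * (1 - vR^2)) :
    β^2 - 4*α*γ = 4 * ρL * ρR * (1 - vL^2) * (1 - vR^2) * (vR - vL)^2 ∧
    0 < β^2 - 4*α*γ := by
  obtain ⟨h1, h2⟩ := hvL
  obtain ⟨h3, h4⟩ := hvR
  have hL : 0 < 1 - vL^2 := by nlinarith
  have hR : 0 < 1 - vR^2 := by nlinarith
  have heq : β^2 - 4*α*γ = 4 * ρL * ρR * (1 - vL^2) * (1 - vR^2) * (vR - vL)^2 := by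
    subst hα hβ hγ; ring
  refine ⟨heq, heq ▸ ?_⟩
  have h5 : (vR - vL)^2 > 0 := by
    have : vR - vL ≠ 0 := sub_ne_zero.mpr (Ne.symm hne)
    positivity
  nlinarith [mul_pos (mul_pos (mul_pos (mul_pos hρL hρR) hL) hR) h5]
end

section
/- Under the assumptions ρ_L, ρ_R > 0, v_L, v_R ∈ (-1,1), α = ρ_R(1-v_L^2) - ρ_L(1-v_R^2) ≠ 0, and v_L < v_R, the root v_- = (ρ_R v_R(1-v_L^2) - ρ_L v_L(1-v_R^2) - |v_R - v_L|·sqrt(ρ_L ρ_R (1-v_L^2)(1-v_R^2)))/(ρ_R(1-v_L^2) - ρ_L(1-v_R^2)) lies strictly between v_L and v_R. -/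
/-- If `ρ_L, ρ_R > 0`, `v_L, v_R ∈ (-1,1)`, `α ≠ 0` and `v_L < v_R`, then the root
`v₋ = (ρ_R v_R(1-v_L²) - ρ_L v_L(1-v_R²) - |v_R - v_L|√(ρ_Lρ_R(1-v_L²)(1-v_R²)))/α`
lies strictly between `v_L` and `v_R`. -/
theorem stmt13 (ρL ρR vL vR : ℝ) (hρL : 0 < ρL) (hρR : 0 < ρR)
    (hvL : vL ∈ Set.Ioo (-1 : ℝ) 1) (hvR : vR ∈ Set.Ioo (-1 : ℝ) 1)
    (hα : ρR * (1 - vL^2) - ρL * (1 - vR^2) ≠ 0)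
    (hlt : vL < vR)
    (vm : ℝ)
    (hvm : vm = (ρR * vR * (1 - vL^2) - ρL * vL * (1 - vR^2)
        - |vR - vL| * Real.sqrt (ρL * ρR * (1 - vL^2) * (1 - vR^2)))
      / (ρR * (1 - vL^2) - ρL * (1 - vR^2))) :
    vL < vm ∧ vm < vR := by
  obtain ⟨hL1, hL2⟩ := hvL
  obtain ⟨hR1, hR2⟩ := hvR
  have hv1 : (0:ℝ) < 1 - vL^2 := by nlinarith
  have hv2 : (0:ℝ) < 1 - vR^2 := by nlinarith
  set A : ℝ := ρR * (1 - vL^2) with hA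
  set B : ℝ := ρL * (1 - vR^2) with hB
  have hApos : 0 < A := mul_pos hρR hv1
  have hBpos : 0 < B := mul_pos hρL hv2
  have hargpos : 0 < ρL * ρR * (1 - vL^2) * (1 - vR^2) := by positivity
  set s : ℝ := Real.sqrt (ρL * ρR * (1 - vL^2) * (1 - vR^2)) with hs
  have hspos : 0 < s := Real.sqrt_pos.mpr hargpos
  have hs2 : s ^ 2 = A * B := by
    rw [hs, Real.sq_sqrt hargpos.le, hA, hB]; ring
  have habs : |vR - vL| = vR - vL := abs_of_pos (by linarith)
  rw [habs] at hvm
  have hvm' : vm * (A - B) = A * vR - B * vL - (vR - vL) * s := by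
    rw [hvm]; field_simp; ring
  have hd : vR - vL > 0 := by linarith
  constructor
  · have key : ((vm - vL) * (A + s)) * (A - B) = ((vR - vL) * A) * (A - B) := by
      linear_combination (A + s) * hvm' - (vR - vL) * hs2
    have h1 : (vm - vL) * (A + s) = (vR - vL) * A := mul_right_cancel₀ hα key
    nlinarith [mul_pos hd hApos]
  · have key : ((vR - vm) * (s + B)) * (A - B) = ((vR - vL) * B) * (A - B) := by
      linear_combination (-(s + B)) * hvm' + (vR - vL) * hs2
    have h1 : (vR - vm) * (s + B) = (vR - vL) * B := mul_right_cancel₀ hα key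
    nlinarith [mul_pos hd hBpos]
end

section
/- For M > 0 and 0 ≤ x < 1, the function f(x,r) = r·sqrt(1 - x(1 - 2M/r)) + (xM/sqrt(1-x))·log(x(M-r) + r + sqrt(1-x)·r·sqrt(1 - x(1 - 2M/r))) satisfies ∂f/∂r (x,r) = sqrt(1 - x(1 - 2M/r)) for all r > 2M with 1 - x(1 - 2M/r) > 0. -/
/-- For `M > 0` and `0 ≤ x < 1`, the function
`f(x,r) = r√(1 - x(1 - 2M/r)) + (xM/√(1-x))·log(x(M-r) + r + √(1-x)·r·√(1 - x(1 - 2M/r)))`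
is a primitive in `r` of `√(1 - x(1 - 2M/r))` for `r > 2M` with `1 - x(1 - 2M/r) > 0`. -/
theorem stmt14 (M x : ℝ) (hM : 0 < M) (hx0 : 0 ≤ x) (hx1 : x < 1)
    (f : ℝ → ℝ)
    (hf : ∀ r, f r = r * Real.sqrt (1 - x * (1 - 2*M/r))
      + x*M/Real.sqrt (1 - x)
        * Real.log (x*(M - r) + r
            + Real.sqrt (1 - x) * r * Real.sqrt (1 - x * (1 - 2*M/r)))) :
    ∀ r, 2*M < r → 0 < 1 - x * (1 - 2*M/r) →
      HasDerivAt f (Real.sqrt (1 - x * (1 - 2*M/r))) r := by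
  have hfe : f = fun r => r * Real.sqrt (1 - x * (1 - 2*M/r))
      + x*M/Real.sqrt (1 - x)
        * Real.log (x*(M - r) + r
            + Real.sqrt (1 - x) * r * Real.sqrt (1 - x * (1 - 2*M/r))) := funext hf
  subst hfe
  intro r hr hg
  have hr0 : 0 < r := lt_trans (by linarith) hr
  have hx' : 0 < 1 - x := by linarith
  set q := Real.sqrt (1 - x) with hq
  set s := Real.sqrt (1 - x * (1 - 2*M/r)) with hs
  have hq0 : 0 < q := Real.sqrt_pos.mpr hx'
  have hs0 : 0 < s := Real.sqrt_pos.mpr hg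
  have hq2 : q * q = 1 - x := Real.mul_self_sqrt hx'.le
  have hs2 : s * s = 1 - x * (1 - 2*M/r) := Real.mul_self_sqrt hg.le
  have hh : 0 < x*(M - r) + r + q * r * s := by
    have h1 : x*(M - r) + r = x*M + (1-x)*r := by ring
    nlinarith [mul_pos (mul_pos hq0 hr0) hs0, mul_nonneg hx0 hM.le, mul_pos hx' hr0]
  have d1 : HasDerivAt (fun t:ℝ => 2*M/t) ((0*r - 2*M*1)/r^2) r :=
    (hasDerivAt_const r (2*M)).div (hasDerivAt_id r) hr0.ne'
  have d2 : HasDerivAt (fun t => 1 - x * (1 - 2*M/t))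
      (-(x * (-((0*r - 2*M*1)/r^2)))) r :=
    ((d1.const_sub 1).const_mul x).const_sub 1
  have ds : HasDerivAt (fun t => Real.sqrt (1 - x * (1 - 2*M/t)))
      ((-(x * (-((0*r - 2*M*1)/r^2)))) / (2 * s)) r := d2.sqrt hg.ne'
  have dterm1 := (hasDerivAt_id r).mul ds
  have dA : HasDerivAt (fun t => x*(M - t)) (x * (0 - 1)) r :=
    ((hasDerivAt_const r M).sub (hasDerivAt_id r)).const_mul x
  have dC := ((hasDerivAt_id r).const_mul q).mul ds
  have dh := (dA.add (hasDerivAt_id r)).add dC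
  have dlog := dh.log hh.ne'
  have dterm2 := dlog.const_mul (x*M/q)
  have dfull := dterm1.add dterm2
  convert dfull using 1
  case e'_4 => rfl
  case e'_5 => rfl
  case e'_8 => rfl
  have hs2' : r * (s * s) = (1-x)*r + 2*M*x := by
    rw [hs2]; field_simp; ring
  simp only [Pi.add_apply, Pi.mul_apply]
  rw [← hs]
  clear_value s q
  clear hf d1 d2 ds dterm1 dA dC dh dlog dterm2 dfull hs hq hs2
  simp only [id]
  have hh' : x * (M - r) + r + s * r * q ≠ 0 := by nlinarith
  field_simp
  linear_combination (x*M*2*s*r) * hq2 - (x*M*2*q) * hs2'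
end

section
/- For the Euler–Schwarzschild model, the map from (ρ, v) with ρ > 0 and v ∈ (-1,1)\{0} to the conserved variables V^0 = ρ(1 + k^2 v^2)/(1 - v^2), V^1 = ρ v(1 + k^2)/(1 - v^2) is inverted by v = (1 + k^2 - sqrt((1+k^2)^2 - 4k^2 (V^1/V^0)^2))/(2k^2 V^1/V^0) and ρ = V^1(1 - v^2)/(v(1 + k^2)). -/
/-- The map `(ρ, v) ↦ (V⁰, V¹)` to the conserved variables of the Euler–Schwarzschild
model, `V⁰ = ρ(1 + k²v²)/(1 - v²)` and `V¹ = ρv(1 + k²)/(1 - v²)`, is inverted by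
`v = (1 + k² - √((1+k²)² - 4k²(V¹/V⁰)²))/(2k²V¹/V⁰)` and `ρ = V¹(1 - v²)/(v(1 + k²))`. -/
theorem stmt17 (k ρ v : ℝ) (hk : k ∈ Set.Ioo (0:ℝ) 1) (hρ : 0 < ρ)
    (hv : v ∈ Set.Ioo (-1 : ℝ) 1) (hv0 : v ≠ 0)
    (V0 V1 : ℝ)
    (hV0 : V0 = ρ * (1 + k^2 * v^2) / (1 - v^2))
    (hV1 : V1 = ρ * v * (1 + k^2) / (1 - v^2)) :
    0 ≤ (1 + k^2)^2 - 4*k^2*(V1/V0)^2 ∧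
    (1 + k^2 - Real.sqrt ((1 + k^2)^2 - 4*k^2*(V1/V0)^2)) / (2*k^2*(V1/V0)) = v ∧
    V1 * (1 - v^2) / (v * (1 + k^2)) = ρ := by
  obtain ⟨hk0, hk1⟩ := hk
  obtain ⟨hvm, hvp⟩ := hv
  have h1v : (0:ℝ) < 1 - v^2 := by nlinarith
  have hkv : (0:ℝ) < 1 - k^2*v^2 := by nlinarith
  have hA : (0:ℝ) < 1 + k^2*v^2 := by nlinarith
  have hK : (0:ℝ) < 1 + k^2 := by nlinarith
  have hV0pos : 0 < V0 := by
    rw [hV0]; exact div_pos (by positivity) h1v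
  have hr : V1/V0 = v*(1+k^2)/(1+k^2*v^2) := by
    rw [hV0, hV1]; field_simp
  have hsq : (1 + k^2)^2 - 4*k^2*(V1/V0)^2
      = ((1+k^2)*(1-k^2*v^2)/(1+k^2*v^2))^2 := by
    rw [hr]; field_simp; ring
  have hsqrt : Real.sqrt ((1 + k^2)^2 - 4*k^2*(V1/V0)^2)
      = (1+k^2)*(1-k^2*v^2)/(1+k^2*v^2) := by
    rw [hsq, Real.sqrt_sq (le_of_lt (div_pos (mul_pos hK hkv) hA))]
  refine ⟨by rw [hsq]; positivity, ?_, ?_⟩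
  · rw [hsqrt, hr]
    field_simp
    ring
  · rw [hV1]; field_simp
end

section
/- Given a supersonic state with velocity v_- ∈ (k, 1) and density ρ_- > 0, the state defined by v_+ = k^2/v_- and ρ_+ = ρ_-(v_-^2 - k^4)/(k^2(1 - v_-^2)) is subsonic (i.e. v_+ ∈ (0, k)) with ρ_+ > 0, and the flux vector F̂(ρ,v) = ((1+k^2)ρv/(1-v^2), (v^2+k^2)ρ/(1-v^2)) takes the same value at (ρ_-, v_-) and (ρ_+, v_+). -/
/-- A standing (zero-speed) shock of the Euler–Schwarzschild model: given a supersonic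
state `v₋ ∈ (k,1)`, `ρ₋ > 0`, the state `v₊ = k²/v₋`, `ρ₊ = ρ₋(v₋² - k⁴)/(k²(1 - v₋²))`
is subsonic with positive density, and both components of the reduced flux
`F̂(ρ,v) = ((1+k²)ρv/(1-v²), (v²+k²)ρ/(1-v²))` coincide at the two states. -/
theorem stmt19 (k ρm vm : ℝ) (hk : k ∈ Set.Ioo (0:ℝ) 1)
    (hvm : vm ∈ Set.Ioo k 1) (hρm : 0 < ρm)
    (vp ρp : ℝ) (hvp : vp = k^2/vm)
    (hρp : ρp = ρm * (vm^2 - k^4) / (k^2 * (1 - vm^2))) :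
    vp ∈ Set.Ioo (0:ℝ) k ∧ 0 < ρp ∧
    (1 + k^2) * ρm * vm / (1 - vm^2) = (1 + k^2) * ρp * vp / (1 - vp^2) ∧
    (vm^2 + k^2) * ρm / (1 - vm^2) = (vp^2 + k^2) * ρp / (1 - vp^2) := by
  obtain ⟨hk0, hk1⟩ := hk
  obtain ⟨hvk, hv1⟩ := hvm
  have hvm0 : 0 < vm := lt_trans hk0 hvk
  have h1v : 0 < 1 - vm^2 := by nlinarith
  have hk2vm : k^2 < vm := by nlinarith
  have hnum : 0 < vm^2 - k^4 := by nlinarith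
  have hvp0 : 0 < vp := by rw [hvp]; positivity
  have hvpk : vp < k := by
    rw [hvp, div_lt_iff₀ hvm0]; nlinarith
  have hρp0 : 0 < ρp := by
    rw [hρp]; positivity
  have h1vp : 0 < 1 - vp^2 := by nlinarith
  refine ⟨⟨hvp0, hvpk⟩, hρp0, ?_, ?_⟩ <;>
  · subst hvp hρp
    have h1 : vm ≠ 0 := hvm0.ne'
    have h2 : k ≠ 0 := hk0.ne'
    have h3 : (1 - vm^2) ≠ 0 := h1v.ne'
    have h4 : (vm^2 - k^4) ≠ 0 := hnum.ne'
    rw [div_eq_div_iff h3 h1vp.ne']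
    field_simp <;>
    ring
end
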